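/- Let (p_k)_{k \in K} be a family of positive reals indexed by a countable set K \subseteq \mathbb{N} with \sum_{k \in K} p_k = 1, and define the cumulative sums c_k = \sum_{j \in K, j \le k} p_j and c_k^- = \sum_{j \in K, j < k} p_j, so that the intervals [c_k^-, c_k] for k \in K partition [0,1] up to endpoints. Then the mixture measure \sum_{k \in K} p_k \cdot \mathrm{Unif}([c_k^-, c_k]), where \mathrm{Unif}([a,b]) is the uniform probability measure on [a,b], equals the uniform probability measure on [0,1]. -/

import Mathlib

open MeasureTheory

/-- The crux of the discrete case of Lemma A1 of the paper: the mixture, with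
weights `p k`, of the uniform distributions on the consecutive intervals
`[c⁻ k, c k]` (where `c⁻ k = ∑_{j ∈ K, j < k} p j` and
`c k = ∑_{j ∈ K, j ≤ k} p j`) is exactly the uniform distribution on `[0,1]`.
Here the uniform probability measure on `[a,b]` is `(b - a)⁻¹ • (volume restricted
to `[a,b]`). -/
theorem stmt_12 (K : Set ℕ) [DecidablePred (· ∈ K)] (p : ℕ → ℝ)
    (hpos : ∀ k ∈ K, 0 < p k)
    (hsum : ∑' k : K, p (k : ℕ) = 1)
    (c cm : ℕ → ℝ)
    (hc : ∀ k, c k = ∑ j ∈ (Finset.range (k + 1)).filter (· ∈ K), p j)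
    (hcm : ∀ k, cm k = ∑ j ∈ (Finset.range k).filter (· ∈ K), p j) :
    Measure.sum (fun k : K => ENNReal.ofReal (p (k : ℕ)) •
        ((ENNReal.ofReal (c (k : ℕ) - cm (k : ℕ)))⁻¹ •
          volume.restrict (Set.Icc (cm (k : ℕ)) (c (k : ℕ))))) =
      volume.restrict (Set.Icc (0 : ℝ) 1) := by
  classical
  set q : ℕ → ℝ := K.indicator p with hqdef
  have hq0 : ∀ j, 0 ≤ q j := fun j => by
    by_cases h : j ∈ K
    · simp [hqdef, Set.indicator_of_mem h, (hpos j h).le]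
    · simp [hqdef, Set.indicator_of_notMem h]
  have hqsum : ∑' j, q j = 1 := by
    rw [hqdef, ← tsum_subtype]; exact hsum
  have hsumm : Summable q := by
    by_contra h
    rw [tsum_eq_zero_of_not_summable h] at hqsum
    norm_num at hqsum
  have hhs : HasSum q 1 := hqsum ▸ hsumm.hasSum
  have hc' : ∀ k, c k = ∑ j ∈ Finset.range (k + 1), q j := fun k => by
    rw [hc k, Finset.sum_filter]
    exact Finset.sum_congr rfl fun j _ => by
      by_cases h : j ∈ K <;>
        simp [hqdef, h, Set.indicator_of_mem, Set.indicator_of_notMem]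
  have hcm' : ∀ k, cm k = ∑ j ∈ Finset.range k, q j := fun k => by
    rw [hcm k, Finset.sum_filter]
    exact Finset.sum_congr rfl fun j _ => by
      by_cases h : j ∈ K <;>
        simp [hqdef, h, Set.indicator_of_mem, Set.indicator_of_notMem]
  have hdiff : ∀ k ∈ K, c k - cm k = p k := fun k hk => by
    rw [hc' k, hcm' k, Finset.sum_range_succ]
    simp [hqdef, Set.indicator_of_mem hk]
  have hcm0 : ∀ k, 0 ≤ cm k := fun k => by
    rw [hcm' k]; exact Finset.sum_nonneg fun j _ => hq0 j
  have hcle1 : ∀ k, c k ≤ 1 := fun k => by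
    rw [hc' k, ← hqsum]
    exact Summable.sum_le_tsum _ (fun j _ => hq0 j) hsumm
  have hcmlec : ∀ k, cm k ≤ c k := fun k => by
    rw [hc' k, hcm' k, Finset.sum_range_succ]
    exact le_add_of_nonneg_right (hq0 k)
  -- each summand is the restriction to the Ioc
  have h1 : (fun k : K => ENNReal.ofReal (p (k : ℕ)) •
        ((ENNReal.ofReal (c (k : ℕ) - cm (k : ℕ)))⁻¹ •
          volume.restrict (Set.Icc (cm (k : ℕ)) (c (k : ℕ))))) =
      fun k : K => volume.restrict (Set.Ioc (cm (k : ℕ)) (c (k : ℕ))) := by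
    funext k
    obtain ⟨k, hk⟩ := k
    simp only
    rw [hdiff k hk, smul_smul, ENNReal.mul_inv_cancel
        (by simpa using hpos k hk) ENNReal.ofReal_ne_top, one_smul,
      Measure.restrict_congr_set Ioc_ae_eq_Icc.symm]
  rw [h1]
  -- the Ioc's are pairwise disjoint
  have hmono : ∀ {k₁ k₂ : ℕ}, k₁ < k₂ → c k₁ ≤ cm k₂ := fun {k₁ k₂} h => by
    rw [hc' k₁, hcm' k₂]
    exact Finset.sum_le_sum_of_subset_of_nonneg
      (Finset.range_subset_range.2 h) (fun j _ _ => hq0 j)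
  have hdisj : Pairwise (Function.onFun Disjoint
      (fun k : K => Set.Ioc (cm (k : ℕ)) (c (k : ℕ)))) := by
    intro k₁ k₂ hne
    have : (k₁ : ℕ) ≠ (k₂ : ℕ) := fun h => hne (Subtype.ext h)
    rcases this.lt_or_gt with h | h
    · exact Set.Ioc_disjoint_Ioc.2 (le_max_of_le_right (min_le_left _ _ |>.trans (hmono h)))
    · exact Set.Ioc_disjoint_Ioc.2 (le_max_of_le_left (min_le_right _ _ |>.trans (hmono h)))
  rw [← Measure.restrict_iUnion hdisj (fun k => measurableSet_Ioc)]
  -- the union is a.e. equal to [0,1]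
  apply Measure.restrict_congr_set
  rw [MeasureTheory.ae_eq_set]
  constructor
  · refine measure_mono_null (t := (∅ : Set ℝ)) (fun x hx => ?_) measure_empty
    obtain ⟨⟨_, ⟨k, rfl⟩, hxk⟩, hx2⟩ := hx
    exact hx2 ⟨(hcm0 _).trans hxk.1.le, hxk.2.trans (hcle1 _)⟩
  · refine measure_mono_null (t := ({0, 1} : Set ℝ)) (fun x hx => ?_) ?_
    · 
      obtain ⟨⟨hx0, hx1⟩, hxU⟩ := hx
      by_contra hx01
      simp only [Set.mem_insert_iff, Set.mem_singleton_iff, not_or] at hx01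
      have hx0' : 0 < x := hx0.lt_of_ne (Ne.symm hx01.1)
      have hx1' : x < 1 := hx1.lt_of_ne hx01.2
      -- find minimal n with x ≤ c n
      have hex : ∃ n, x ≤ c n := by
        have ht : Filter.Tendsto (fun n => ∑ j ∈ Finset.range n, q j)
            Filter.atTop (nhds 1) := hhs.tendsto_sum_nat
        obtain ⟨n, hn⟩ := (ht.eventually (eventually_gt_nhds hx1')).exists
        refine ⟨n, le_trans (le_of_lt ?_) (hcmlec n)⟩
        rwa [hcm' n]
      set n := Nat.find hex with hn
      have hxn : x ≤ c n := Nat.find_spec hex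
      have hmin : ∀ m < n, ¬ x ≤ c m := fun m hm => Nat.find_min hex hm
      have hnK : n ∈ K := by
        by_contra hnK
        have hqn : q n = 0 := by simp [hqdef, Set.indicator_of_notMem hnK]
        have hceq : c n = cm n := by
          rw [hc' n, hcm' n, Finset.sum_range_succ, hqn, add_zero]
        rcases Nat.eq_zero_or_pos n with h0 | h0
        · have : cm n = 0 := by rw [h0, hcm' 0]; simp
          rw [hceq, this] at hxn
          exact absurd hxn (not_le.2 hx0')
        · obtain ⟨m, hm⟩ := Nat.exists_eq_succ_of_ne_zero h0.ne'
          apply hmin m (by omega)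
          rw [hceq] at hxn
          rw [hc' m, ← hcm' (m + 1)]
          rw [hm] at hxn
          exact hxn
      have hcmx : cm n < x := by
        rcases Nat.eq_zero_or_pos n with h0 | h0
        · rw [h0, hcm' 0]; simpa using hx0'
        · obtain ⟨m, hm⟩ := Nat.exists_eq_succ_of_ne_zero h0.ne'
          have := hmin m (by omega)
          rw [not_le] at this
          rw [hm, hcm' (m + 1), ← hc' m]
          exact this
      exact hxU (Set.mem_iUnion.2 ⟨⟨n, hnK⟩, hcmx, hxn⟩)
    · have : volume ({0, 1} : Set ℝ) ≤ volume ({0} : Set ℝ) + volume ({1} : Set ℝ) :=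
        measure_union_le _ _
      simpa using le_antisymm (by simpa using this) zero_le
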